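/- arXiv:1502.03766 — 5 statements merged into one kernel-verified Lean document; each statement's English description precedes it below -/
import Mathlib

section
/- Let C be a commutative ring, R a (possibly non-unital) C-algebra, G a semigroup with zero, and δ : G → R a central map that preserves zero. Then the map CG → R given by f ↦ ∑_{g∈G} f(g)δ(g) vanishes on the ideal I₀, hence induces a well-defined map t_δ : \overline{CG} → R, and t_δ is a C-linear trace. -/
/-- The one-step relation: `x = a*b` and `y = b*a`. -/
def simStep {G : Type*} [Mul G] (x y : G) : Prop := ∃ a b : G, x = a * b ∧ y = b * a

/-- The relation `~` on a semigroup: the reflexive-transitive closure of `simStep`. -/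
def sim {G : Type*} [Mul G] : G → G → Prop := Relation.ReflTransGen simStep

theorem sim_equiv {G : Type*} [Mul G] : Equivalence (sim (G := G)) :=
  ⟨fun _ => Relation.ReflTransGen.refl,
   fun h => by
      have : Std.Symm (simStep (G := G)) := ⟨fun _ _ ⟨a, b, h1, h2⟩ => ⟨b, a, h2, h1⟩⟩
      exact Std.Symm.symm (r := Relation.ReflTransGen simStep) _ _ h,
   fun h1 h2 => Relation.ReflTransGen.trans h1 h2⟩

/-- The setoid on `G` given by `~`. -/
def simSetoid (G : Type*) [Mul G] : Setoid G := ⟨sim, sim_equiv⟩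

/-- The additive subgroup `[A,A]` generated by commutators. -/
def commutatorSubgroup (A : Type*) [NonUnitalNonAssocRing A] : AddSubgroup A :=
  AddSubgroup.closure {x | ∃ a b : A, x = a * b - b * a}

/-- The ideal `I₀` of the semigroup ring `CG` consisting of functions supported in `{0}`. -/
noncomputable def I0 (C G : Type*) [CommRing C] [SemigroupWithZero G] :
    TwoSidedIdeal (MonoidAlgebra C G) :=
  TwoSidedIdeal.mk' {f : MonoidAlgebra C G | ∀ g : G, g ≠ 0 → f.coeff g = 0}
    (fun _ _ => rfl)
    (fun {x y} hx hy g hg => by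
      show (x + y).coeff g = 0
      rw [MonoidAlgebra.coeff_add, Finsupp.add_apply, hx g hg, hy g hg, add_zero])
    (fun {x} hx g hg => by
      show (-x).coeff g = 0
      rw [MonoidAlgebra.coeff_neg, Finsupp.neg_apply, hx g hg, neg_zero])
    (fun {x y} hy g hg => by
      classical
      rw [MonoidAlgebra.coeff_mul]
      rw [Finsupp.sum]
      refine Finset.sum_eq_zero fun a _ => ?_
      rw [Finsupp.sum]
      refine Finset.sum_eq_zero fun b hb => ?_
      have hb0 : b = 0 := by
        by_contra h
        exact Finsupp.mem_support_iff.mp hb (hy b h)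
      subst hb0
      rw [mul_zero, if_neg fun h => hg h.symm])
    (fun {x y} hx g hg => by
      classical
      rw [MonoidAlgebra.coeff_mul]
      rw [Finsupp.sum]
      refine Finset.sum_eq_zero fun a ha => ?_
      rw [Finsupp.sum]
      refine Finset.sum_eq_zero fun b _ => ?_
      have ha0 : a = 0 := by
        by_contra h
        exact Finsupp.mem_support_iff.mp ha (hx a h)
      subst ha0
      rw [zero_mul, if_neg fun h => hg h.symm])

/-- The contracted semigroup ring `\overline{CG} = CG / I₀`. -/
abbrev ContractedSemigroupRing (C G : Type*) [CommRing C] [SemigroupWithZero G] :=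
  (I0 C G).ringCon.Quotient

/-- The quotient map `π : CG → \overline{CG}`. -/
noncomputable def toCSR (C G : Type*) [CommRing C] [SemigroupWithZero G]
    (f : MonoidAlgebra C G) : ContractedSemigroupRing C G := f

/-- The map `f ↦ ∑_g f(g) • δ(g)` from `CG` to `R`. -/
def elemSum (C : Type*) {G R : Type*} [CommRing C] [SemigroupWithZero G]
    [AddCommMonoid R] [Module C R] (δ : G → R) (f : MonoidAlgebra C G) : R :=
  f.coeff.sum fun g c => c • δ g

set_option linter.unusedSectionVars false

section auxTrace
variable {C G R : Type*} [CommRing C] [SemigroupWithZero G]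
    [NonUnitalRing R] [Module C R] [SMulCommClass C R R] [IsScalarTower C R R]

lemma elemSum_eq_lift (δ : G → R) (f : MonoidAlgebra C G) :
    elemSum C δ f = Finsupp.lift R C G δ f.coeff := rfl

lemma elemSum_add (δ : G → R) (f g : MonoidAlgebra C G) :
    elemSum C δ (f + g) = elemSum C δ f + elemSum C δ g :=
  by rw [elemSum_eq_lift, elemSum_eq_lift, elemSum_eq_lift, MonoidAlgebra.coeff_add]; exact map_add (Finsupp.lift R C G δ) f.coeff g.coeff

lemma elemSum_sub (δ : G → R) (f g : MonoidAlgebra C G) :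
    elemSum C δ (f - g) = elemSum C δ f - elemSum C δ g :=
  by rw [elemSum_eq_lift, elemSum_eq_lift, elemSum_eq_lift, MonoidAlgebra.coeff_sub]; exact map_sub (Finsupp.lift R C G δ) f.coeff g.coeff

lemma elemSum_smul (δ : G → R) (c : C) (f : MonoidAlgebra C G) :
    elemSum C δ (c • f) = c • elemSum C δ f :=
  by rw [elemSum_eq_lift, elemSum_eq_lift, MonoidAlgebra.coeff_smul]; exact map_smul (Finsupp.lift R C G δ) c f.coeff

lemma elemSum_single (δ : G → R) (g : G) (c : C) :
    elemSum C δ (MonoidAlgebra.single g c) = c • δ g := by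
  rw [elemSum, MonoidAlgebra.coeff_single]; exact Finsupp.sum_single_index (zero_smul C _)

lemma elemSum_mul (δ : G → R) (hcentral : ∀ g h : G, δ (g * h) = δ (h * g))
    (f g : MonoidAlgebra C G) :
    elemSum C δ (f * g) = elemSum C δ (g * f) := by
  classical
  have expand : ∀ u v : MonoidAlgebra C G,
      elemSum C δ (u * v) = u.coeff.sum fun a c => v.coeff.sum fun b d => (c * d) • δ (a * b) := by
    intro u v
    rw [MonoidAlgebra.mul_def, elemSum_eq_lift, MonoidAlgebra.coeff_finsuppSum, map_finsuppSum]
    refine Finsupp.sum_congr fun a _ => ?_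
    rw [MonoidAlgebra.coeff_finsuppSum, map_finsuppSum]
    refine Finsupp.sum_congr fun b _ => ?_
    rw [← elemSum_eq_lift, elemSum_single]
  rw [expand, expand, Finsupp.sum_comm]
  refine Finsupp.sum_congr fun a _ => Finsupp.sum_congr fun b _ => ?_
  rw [hcentral, mul_comm]

end auxTrace

/-- For a central zero-preserving map `δ : G → R`, the map
`f ↦ ∑_g f(g) • δ(g)` vanishes on `I₀`, hence induces a well-defined map
`t_δ : \overline{CG} → R`, which is a `C`-linear trace. -/
theorem semigroupRing_induced_trace
    {C G R : Type*} [CommRing C] [SemigroupWithZero G]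
    [NonUnitalRing R] [Module C R] [SMulCommClass C R R] [IsScalarTower C R R]
    (δ : G → R) (hcentral : ∀ g h : G, δ (g * h) = δ (h * g)) (hzero : δ 0 = 0) :
    (∀ f ∈ I0 C G, elemSum C δ f = 0) ∧
    ∃ t : ContractedSemigroupRing C G → R,
      (∀ f : MonoidAlgebra C G, t (toCSR C G f) = elemSum C δ f) ∧
      (∀ x y : ContractedSemigroupRing C G, t (x + y) = t x + t y) ∧
      (∀ x y : ContractedSemigroupRing C G, t (x * y) = t (y * x)) ∧
      (∀ (c : C) (f : MonoidAlgebra C G),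
        t (toCSR C G (c • f)) = c • t (toCSR C G f)) := by
  classical
  have hmem : ∀ f : MonoidAlgebra C G, f ∈ I0 C G ↔ ∀ g : G, g ≠ 0 → f.coeff g = 0 :=
    fun f => TwoSidedIdeal.mem_mk' _ _ _ _ _ _ f
  have h0 : ∀ f ∈ I0 C G, elemSum C δ f = 0 := by
    intro f hf
    rw [elemSum, Finsupp.sum]
    refine Finset.sum_eq_zero fun g hg => ?_
    by_cases h : g = 0
    · subst h; rw [hzero, smul_zero]
    · exact absurd ((hmem f).mp hf g h) (Finsupp.mem_support_iff.mp hg)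
  refine ⟨h0, Quotient.lift (elemSum C δ) ?_, fun f => rfl, ?_, ?_, ?_⟩
  · intro a b hab
    have : a - b ∈ I0 C G := (TwoSidedIdeal.rel_iff _ _ _).mp hab
    have := h0 _ this
    rw [elemSum_sub] at this
    exact sub_eq_zero.mp this
  · intro x y
    refine Quotient.inductionOn₂ x y fun f g => ?_
    exact elemSum_add δ f g
  · intro x y
    refine Quotient.inductionOn₂ x y fun f g => ?_
    exact elemSum_mul δ hcentral f g
  · intro c f
    exact elemSum_smul δ c f
end

section
/- Let C be a commutative unital ring, n ≥ 1 a natural number, and c ∈ C. The C-linear trace t : Mₙ(C) → C given by t(M) = c · tr(M) is minimal (i.e., t(M) = 0 implies M ∈ [Mₙ(C), Mₙ(C)], the additive subgroup generated by commutators AB − BA) if and only if c is not a zero divisor in C (i.e., for all a ∈ C, a·c = 0 implies a = 0). -/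
open Matrix

lemma trace_eq_zero_of_mem_commutatorSubgroup {C : Type*} [CommRing C] {n : ℕ}
    {M : Matrix (Fin n) (Fin n) C}
    (h : M ∈ commutatorSubgroup (Matrix (Fin n) (Fin n) C)) : Matrix.trace M = 0 := by
  induction h using AddSubgroup.closure_induction with
  | mem x hx =>
    obtain ⟨a, b, rfl⟩ := hx
    simp [Matrix.trace_sub, Matrix.trace_mul_comm a b]
  | zero => simp
  | add x y _ _ hx hy => simp [Matrix.trace_add, hx, hy]
  | neg x _ hx => simp [hx]

lemma mem_commutatorSubgroup_of_trace_eq_zero {C : Type*} [CommRing C] {n : ℕ} (hn : 1 ≤ n)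
    {M : Matrix (Fin n) (Fin n) C} (h : Matrix.trace M = 0) :
    M ∈ commutatorSubgroup (Matrix (Fin n) (Fin n) C) := by
  set G := commutatorSubgroup (Matrix (Fin n) (Fin n) C)
  have mem_comm : ∀ a b : Matrix (Fin n) (Fin n) C, a * b - b * a ∈ G := fun a b =>
    AddSubgroup.subset_closure ⟨a, b, rfl⟩
  set i0 : Fin n := ⟨0, hn⟩
  have key : M = ∑ i : Fin n, ∑ j : Fin n,
      (if i = j then single i i (M i i) - single i0 i0 (M i i)
       else single i j (M i j)) := by
    have h1 : ∀ i j : Fin n,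
        (if i = j then single i i (M i i) - single i0 i0 (M i i)
         else single i j (M i j))
        = single i j (M i j)
          - (if i = j then single i0 i0 (M i i) else 0) := by
      intro i j
      by_cases hij : i = j <;> simp [hij]
    simp_rw [h1, Finset.sum_sub_distrib, Finset.sum_ite_eq, Finset.mem_univ, if_true]
    rw [← matrix_eq_sum_single]
    have : ∑ i : Fin n, single i0 i0 (M i i) = single i0 i0 (Matrix.trace M) := by
      have e : ∀ x : C, single i0 i0 x = x • single i0 i0 (1 : C) := by
        intro x; rw [smul_single, smul_eq_mul, mul_one]
      calc ∑ i : Fin n, single i0 i0 (M i i)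
          = ∑ i : Fin n, (M i i) • single i0 i0 (1 : C) :=
            Finset.sum_congr rfl (fun i _ => e (M i i))
        _ = (∑ i : Fin n, M i i) • single i0 i0 (1 : C) := Finset.sum_smul.symm
        _ = single i0 i0 (Matrix.trace M) := by
            rw [smul_single, smul_eq_mul, mul_one]; rfl
    rw [this, h, single_zero, sub_zero]
  rw [key]
  refine AddSubgroup.sum_mem _ fun i _ => AddSubgroup.sum_mem _ fun j _ => ?_
  by_cases hij : i = j
  · subst hij
    simp only [if_pos rfl]
    have : single i i (M i i) - single i0 i0 (M i i)
        = single i i0 (M i i) * single i0 i 1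
          - single i0 i 1 * single i i0 (M i i) := by
      rw [single_mul_single_same, single_mul_single_same, mul_one, one_mul]
    rw [this]; exact mem_comm _ _
  · simp only [if_neg hij]
    have : single i j (M i j)
        = single i j (M i j) * single j j 1
          - single j j 1 * single i j (M i j) := by
      rw [single_mul_single_same, mul_one, single_mul_single_of_ne (h := Ne.symm hij),
        sub_zero]
    rw [this]; exact mem_comm _ _

/-- For `n ≥ 1` and `c ∈ C`, the `C`-linear trace `M ↦ c · tr(M)` on
`Mₙ(C)` is minimal if and only if `c` is not a zero divisor. -/
theorem matrix_smul_trace_minimal_iff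
    {C : Type*} [CommRing C] (n : ℕ) (hn : 1 ≤ n) (c : C) :
    (∀ M : Matrix (Fin n) (Fin n) C, c * Matrix.trace M = 0 →
        M ∈ commutatorSubgroup (Matrix (Fin n) (Fin n) C)) ↔
      ∀ a : C, a * c = 0 → a = 0 := by
  classical
  constructor
  · intro H a ha
    set i0 : Fin n := ⟨0, hn⟩
    have hM : c * Matrix.trace (single i0 i0 a) = 0 := by
      simp only [Matrix.trace, Matrix.diag_apply]
      calc c * ∑ i : Fin n, single i0 i0 a i i
          = c * a := by
            congr 1
            rw [Finset.sum_eq_single i0]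
            · simp
            · intro b _ hb
              exact single_apply_of_ne _ _ _ _ _ (fun h => hb h.1.symm)
            · simp
        _ = 0 := by rw [mul_comm]; exact ha
    have := trace_eq_zero_of_mem_commutatorSubgroup (H _ hM)
    simp only [Matrix.trace, Matrix.diag_apply] at this
    rw [Finset.sum_eq_single i0] at this
    · rwa [single_apply_same] at this
    · intro b _ hb
      exact single_apply_of_ne _ _ _ _ _ (fun h => hb h.1.symm)
    · simp
  · intro H M hM
    exact mem_commutatorSubgroup_of_trace_eq_zero hn
      (H _ (by rwa [mul_comm] at hM))
end

section
/- Let C be a commutative ring and R a C-algebra with a positive definite involution *. Let (T_i)_{i∈I} be a family of commutative *-closed C-subalgebras of R (each T_i is a C-submodule of R closed under multiplication and under *, and xy = yx for all x, y ∈ T_i). Equip the direct sum ⨁_{i∈I} T_i with the componentwise involution. Then the map t : ⨁_{i∈I} T_i → R defined by t((x_i)_{i∈I}) = ∑_{i∈I} x_i is a faithful C-linear trace. -/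
/-- An element of a `*`-ring is positive if it is a finite sum of elements of the form
`y * star y`. -/
def IsPositiveElem {A : Type*} [NonUnitalRing A] [StarRing A] (x : A) : Prop :=
  x ∈ AddSubmonoid.closure {y : A | ∃ z : A, y = z * star z}

section DirectSum

variable {C R : Type*} [CommRing C] [NonUnitalRing R] [StarRing R] [Module C R]
  [SMulCommClass C R R] [IsScalarTower C R R]
variable {I : Type*} (T : I → NonUnitalStarSubalgebra C R)

/-- Componentwise multiplication on the direct sum `⨁_{i∈I} T_i`. -/
instance directSumMul : Mul (Π₀ i, T i) :=
  ⟨DFinsupp.zipWith (fun _ x y => x * y) (fun _ => mul_zero 0)⟩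

/-- Componentwise involution on the direct sum `⨁_{i∈I} T_i`. -/
instance directSumStar : Star (Π₀ i, T i) :=
  ⟨DFinsupp.mapRange (fun _ x => star x) (fun _ => star_zero _)⟩

open Classical in
/-- The map `⨁_{i∈I} T_i → R` given by `(x_i)_{i∈I} ↦ ∑_{i∈I} x_i`. -/
noncomputable def directSumToRing : (Π₀ i, T i) → R :=
  fun x => DFinsupp.sumAddHom (fun i => AddSubmonoidClass.subtype (T i)) x

lemma aux_mul_apply (x y : Π₀ i, T i) (i : I) : (x * y) i = x i * y i :=
  DFinsupp.zipWith_apply _ _ x y i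

lemma aux_star_apply (x : Π₀ i, T i) (i : I) : (star x) i = star (x i) :=
  DFinsupp.mapRange_apply _ _ x i

open Classical in
lemma aux_t_eq_sum (x : Π₀ i, T i) (s : Finset I) (hs : x.support ⊆ s) :
    directSumToRing T x = ∑ i ∈ s, (x i : R) := by
  rw [directSumToRing, DFinsupp.sumAddHom_apply, DFinsupp.sum]
  refine Finset.sum_subset hs fun i _ hi => ?_
  simp [DFinsupp.notMem_support_iff.mp hi]

lemma aux_hpd_list (hpd : ∀ (n : ℕ) (v : Fin n → R), ∑ i, v i * star (v i) = 0 → ∀ i, v i = 0)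
    (L : List R) (h : (L.map fun z => z * star z).sum = 0) : ∀ z ∈ L, z = 0 := by
  have key : ∀ i : Fin L.length, L.get i = 0 := by
    apply hpd
    rw [← List.sum_ofFn]; simp only [List.get_eq_getElem]
    rw [List.ofFn_getElem_eq_map L (fun z => z * star z)]
    exact h
  intro z hz
  obtain ⟨i, rfl⟩ := List.mem_iff_get.mp hz
  exact key i

/-- If `R` is a `C`-algebra with a positive definite involution and
`(T_i)_{i∈I}` is a family of commutative `*`-closed `C`-subalgebras of `R`, then
`(x_i)_{i∈I} ↦ ∑_{i∈I} x_i` is a faithful `C`-linear trace `⨁_{i∈I} T_i → R`. -/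
theorem directSumToRing_faithful_trace
    (hpd : ∀ (n : ℕ) (v : Fin n → R), ∑ i, v i * star (v i) = 0 → ∀ i, v i = 0)
    (hcomm : ∀ (i : I) (x y : T i), x * y = y * x) :
    (∀ x y : Π₀ i, T i, directSumToRing T (x + y) =
        directSumToRing T x + directSumToRing T y) ∧
    (∀ x y : Π₀ i, T i, directSumToRing T (x * y) = directSumToRing T (y * x)) ∧
    (∀ (c : C) (x : Π₀ i, T i), directSumToRing T (c • x) = c • directSumToRing T x) ∧
    (∀ x : Π₀ i, T i,
      x ∈ AddSubmonoid.closure {y : Π₀ i, T i | ∃ z : Π₀ i, T i, y = z * star z} →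
      x ≠ 0 → IsPositiveElem (directSumToRing T x) ∧ directSumToRing T x ≠ 0) := by
  classical
  have hadd : ∀ x y : Π₀ i, T i, directSumToRing T (x + y) =
      directSumToRing T x + directSumToRing T y := fun x y =>
    (DFinsupp.sumAddHom (fun i => AddSubmonoidClass.subtype (T i))).map_add x y
  have htsq : ∀ z : Π₀ i, T i, directSumToRing T (z * star z)
      = ∑ i ∈ z.support, (z i : R) * star (z i : R) := by
    intro z
    rw [aux_t_eq_sum T (z * star z) z.support]
    · refine Finset.sum_congr rfl fun i _ => ?_
      rw [aux_mul_apply, aux_star_apply]; push_cast; rfl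
    · intro i hi
      simp only [DFinsupp.mem_support_iff, aux_mul_apply, aux_star_apply] at hi ⊢
      intro h0; apply hi; rw [h0]; simp
  refine ⟨hadd, ?_, ?_, ?_⟩
  · intro x y
    congr 1
    ext i
    exact congrArg Subtype.val <|
      (aux_mul_apply T x y i).trans <| (hcomm i _ _).trans (aux_mul_apply T y x i).symm
  · intro c x
    rw [aux_t_eq_sum T (c • x) x.support, aux_t_eq_sum T x x.support (le_refl _),
      Finset.smul_sum]
    · refine Finset.sum_congr rfl fun i _ => ?_
      rw [DFinsupp.smul_apply]
      rfl
    · intro i hi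
      simp only [DFinsupp.mem_support_iff, DFinsupp.smul_apply] at hi ⊢
      intro h0; apply hi; rw [h0, smul_zero]
  · intro x hx
    -- express x as sum of list of squares
    have hlist : ∃ L : List (Π₀ i, T i), x = (L.map fun z => z * star z).sum := by
      induction hx using AddSubmonoid.closure_induction with
      | mem y hy => obtain ⟨z, rfl⟩ := hy; exact ⟨[z], by simp⟩
      | zero => exact ⟨[], by simp⟩
      | add a b _ _ iha ihb =>
        obtain ⟨La, rfl⟩ := iha; obtain ⟨Lb, rfl⟩ := ihb
        exact ⟨La ++ Lb, by simp⟩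
    obtain ⟨L, rfl⟩ := hlist
    intro hx0
    have htL : ∀ L' : List (Π₀ i, T i), directSumToRing T ((L'.map fun z => z * star z).sum)
        = ((L'.flatMap fun z => z.support.toList.map fun i => (z i : R)).map
            fun w => w * star w).sum := by
      intro L'
      induction L' with
      | nil =>
        simp only [List.map_nil, List.sum_nil, List.flatMap_nil]
        have h := hadd 0 0
        rwa [add_zero, left_eq_add] at h
      | cons z L' ih =>
        rw [List.map_cons, List.sum_cons, hadd, ih, List.flatMap_cons, List.map_append,
          List.sum_append, htsq]
        congr 1
        rw [List.map_map]
        exact (Finset.sum_map_toList _ _).symm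
    constructor
    · -- positivity: membership in closure
      rw [htL]
      refine AddSubmonoid.list_sum_mem _ fun w hw => ?_
      obtain ⟨v, _, rfl⟩ := List.mem_map.mp hw
      exact AddSubmonoid.subset_closure ⟨v, rfl⟩
    · -- nonzero
      intro h0
      apply hx0
      rw [htL] at h0
      have hall := aux_hpd_list hpd _ h0
      have hLz : ∀ z ∈ L, z = 0 := by
        intro z hz
        ext i
        by_cases hi : z i = 0
        · simp [hi]
        · exfalso
          have : (z i : R) ∈ L.flatMap fun z => z.support.toList.map fun i => (z i : R) := by
            refine List.mem_flatMap.mpr ⟨z, hz, List.mem_map.mpr ⟨i, ?_, rfl⟩⟩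
            simp [hi]
          have := hall _ this
          exact hi (Subtype.ext this)
      have : L.map (fun z => z * star z) = L.map fun _ => 0 := by
        refine List.map_congr_left fun z hz => ?_
        rw [hLz z hz]
        ext i
        rw [aux_mul_apply]
        simp
      rw [this]
      refine List.sum_eq_zero fun w hw => ?_
      obtain ⟨a, -, rfl⟩ := List.mem_map.mp hw
      rfl

end DirectSum
end

section
/- Let C be a commutative ring with involution *. On the ring C[x,x⁻¹] of Laurent polynomials over C (finitely supported functions ℤ → C with convolution product), define σ : C[x,x⁻¹] → C[x,x⁻¹] by σ(p)(n) = (p(−n))* for all n ∈ ℤ (i.e., σ(∑ᵢ aᵢxⁱ) = ∑ᵢ aᵢ* x⁻ⁱ). Then: (a) σ is additive, σ(σ(p)) = p, and σ(pq) = σ(q)σ(p) for all p, q, so σ is an involution on C[x,x⁻¹]; (b) if * is positive definite on C, then σ is positive definite on C[x,x⁻¹]: for p₁,…,pₙ ∈ C[x,x⁻¹], ∑ᵢ pᵢ·σ(pᵢ) = 0 implies every pᵢ = 0. -/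
/-- The involution `σ` on the Laurent polynomial ring `C[x,x⁻¹]` (realized as the ring of
finitely supported functions `ℤ → C` with convolution product), given by
`σ(∑ aᵢxⁱ) = ∑ aᵢ* x⁻ⁱ`, i.e. `σ(p)(n) = (p(-n))*`. -/
noncomputable def laurentStar (C : Type*) [CommRing C] [StarRing C]
    (p : AddMonoidAlgebra C ℤ) : AddMonoidAlgebra C ℤ :=
  AddMonoidAlgebra.ofCoeff
    (Finsupp.equivMapDomain (Equiv.neg ℤ) (Finsupp.mapRange star (star_zero _) p.coeff))

lemma laurentStar_apply (C : Type*) [CommRing C] [StarRing C]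
    (p : AddMonoidAlgebra C ℤ) (n : ℤ) : (laurentStar C p).coeff n = star (p.coeff (-n)) := by
  simp [laurentStar]

lemma laurentStar_add (C : Type*) [CommRing C] [StarRing C]
    (p q : AddMonoidAlgebra C ℤ) :
    laurentStar C (p + q) = laurentStar C p + laurentStar C q := by
  ext n
  rw [AddMonoidAlgebra.coeff_add (laurentStar C p) (laurentStar C q),
    Finsupp.add_apply (laurentStar C p).coeff (laurentStar C q).coeff n, laurentStar_apply,
    laurentStar_apply, laurentStar_apply, AddMonoidAlgebra.coeff_add p q,
    Finsupp.add_apply p.coeff q.coeff (-n), star_add]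

lemma laurentStar_zero (C : Type*) [CommRing C] [StarRing C] :
    laurentStar C 0 = 0 := by
  ext n; simp [laurentStar_apply]

lemma laurentStar_single (C : Type*) [CommRing C] [StarRing C] (a : ℤ) (c : C) :
    laurentStar C (AddMonoidAlgebra.single a c) = AddMonoidAlgebra.single (-a) (star c) := by
  ext n
  rw [laurentStar_apply]
  simp only [AddMonoidAlgebra.coeff_single]
  rcases eq_or_ne n (-a) with rfl | h
  · rw [Finsupp.single_eq_same, neg_neg, Finsupp.single_eq_same]
  · rw [Finsupp.single_eq_of_ne h, Finsupp.single_eq_of_ne, star_zero]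
    intro hh
    exact h (by omega)

lemma laurentStar_mul (C : Type*) [CommRing C] [StarRing C]
    (p q : AddMonoidAlgebra C ℤ) :
    laurentStar C (p * q) = laurentStar C q * laurentStar C p := by
  induction p using AddMonoidAlgebra.induction_linear with
  | zero => simp [laurentStar_zero]
  | add f g hf hg => rw [add_mul, laurentStar_add, laurentStar_add, hf, hg, mul_add]
  | single a c =>
    induction q using AddMonoidAlgebra.induction_linear with
    | zero => simp [laurentStar_zero]
    | add f g hf hg => rw [mul_add, laurentStar_add, laurentStar_add, hf, hg, add_mul]
    | single b d =>
      show laurentStar C (AddMonoidAlgebra.single a c * AddMonoidAlgebra.single b d)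
        = laurentStar C (AddMonoidAlgebra.single b d) * laurentStar C (AddMonoidAlgebra.single a c)
      rw [AddMonoidAlgebra.single_mul_single]
      show laurentStar C (AddMonoidAlgebra.single (a + b) (c * d)) = _
      rw [laurentStar_single, laurentStar_single, laurentStar_single]
      symm
      show (AddMonoidAlgebra.single (-b) (star d) * AddMonoidAlgebra.single (-a) (star c)
        : AddMonoidAlgebra C ℤ) = AddMonoidAlgebra.single (-(a + b)) (star (c * d))
      rw [AddMonoidAlgebra.single_mul_single, star_mul, neg_add, add_comm]

lemma laurentStar_invol (C : Type*) [CommRing C] [StarRing C]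
    (p : AddMonoidAlgebra C ℤ) : laurentStar C (laurentStar C p) = p := by
  ext n; simp [laurentStar_apply]

lemma coeff_zero_mul_star (C : Type*) [CommRing C] [StarRing C]
    (p : AddMonoidAlgebra C ℤ) :
    (p * laurentStar C p).coeff 0 = ∑ a ∈ p.coeff.support, p.coeff a * star (p.coeff a) := by
  classical
  rw [AddMonoidAlgebra.coeff_mul]
  rw [Finsupp.sum]
  apply Finset.sum_congr rfl
  intro a ha
  have : ((laurentStar C p).coeff.sum fun a₂ b₂ => if a + a₂ = 0 then p.coeff a * b₂ else 0)
      = p.coeff a * (laurentStar C p).coeff (-a) := by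
    have h1 : ((laurentStar C p).coeff.sum fun a₂ b₂ => if a₂ = -a then p.coeff a * b₂ else 0)
        = if -a ∈ (laurentStar C p).coeff.support then p.coeff a * (laurentStar C p).coeff (-a) else 0 :=
      Finsupp.sum_ite_eq' (laurentStar C p).coeff (-a) (fun _ b => p.coeff a * b)
    have h2 : ∀ a₂ b₂, (if a + a₂ = 0 then p.coeff a * b₂ else 0)
        = (if a₂ = -a then p.coeff a * b₂ else 0) := by
      intro a₂ b₂
      congr 1
      simp only [eq_iff_iff]
      omega
    rw [show (fun a₂ b₂ => if a + a₂ = 0 then p.coeff a * b₂ else 0)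
        = (fun (a₂ : ℤ) (b₂ : C) => if a₂ = -a then p.coeff a * b₂ else 0) by
        funext a₂ b₂; exact h2 a₂ b₂, h1]
    by_cases hm : -a ∈ (laurentStar C p).coeff.support
    · rw [if_pos hm]
    · rw [if_neg hm, Finsupp.notMem_support_iff.mp hm, mul_zero]
  rw [this, laurentStar_apply, neg_neg]

lemma posdef_finset (C : Type*) [CommRing C] [StarRing C]
    (h : ∀ (m : ℕ) (v : Fin m → C), ∑ i, v i * star (v i) = 0 → ∀ i, v i = 0)
    {α : Type*} (s : Finset α) (f : α → C)
    (hs : ∑ a ∈ s, f a * star (f a) = 0) : ∀ a ∈ s, f a = 0 := by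
  classical
  intro a ha
  have e := s.equivFin
  have key : ∑ i : Fin s.card, f (e.symm i) * star (f (e.symm i)) = 0 := by
    rw [Fintype.sum_equiv e.symm (fun i => f (e.symm i) * star (f (e.symm i)))
      (fun x : s => f x * star (f x)) (fun i => rfl)]
    rw [Finset.sum_coe_sort s (fun x => f x * star (f x))]
    exact hs
  have := h s.card (fun i => f (e.symm i)) key (e ⟨a, ha⟩)
  simpa using this

/-- (a) `σ` is an involution on `C[x,x⁻¹]`;
(b) if the involution on `C` is positive definite, then so is `σ` on `C[x,x⁻¹]`. -/
theorem laurentStar_involution_and_positive_definite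
    (C : Type*) [CommRing C] [StarRing C] :
    (∀ (p : AddMonoidAlgebra C ℤ) (n : ℤ), (laurentStar C p).coeff n = star (p.coeff (-n))) ∧
    (∀ p q : AddMonoidAlgebra C ℤ,
      laurentStar C (p + q) = laurentStar C p + laurentStar C q) ∧
    (∀ p : AddMonoidAlgebra C ℤ, laurentStar C (laurentStar C p) = p) ∧
    (∀ p q : AddMonoidAlgebra C ℤ,
      laurentStar C (p * q) = laurentStar C q * laurentStar C p) ∧
    ((∀ (m : ℕ) (v : Fin m → C), ∑ i, v i * star (v i) = 0 → ∀ i, v i = 0) →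
      ∀ (m : ℕ) (P : Fin m → AddMonoidAlgebra C ℤ),
        ∑ i, P i * laurentStar C (P i) = 0 → ∀ i, P i = 0) := by
  classical
  refine ⟨laurentStar_apply C, laurentStar_add C, laurentStar_invol C, laurentStar_mul C, ?_⟩
  intro h m P hP i
  have h0 : (∑ i, P i * laurentStar C (P i)).coeff 0 = 0 := by rw [hP]; rfl
  rw [AddMonoidAlgebra.coeff_sum, Finsupp.finset_sum_apply] at h0
  have h0' : ∑ i : Fin m, ∑ a ∈ (P i).coeff.support, (P i).coeff a * star ((P i).coeff a) = 0 := by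
    rw [← h0]
    exact Finset.sum_congr rfl fun i _ => (coeff_zero_mul_star C (P i)).symm
  set s : Finset ((_ : Fin m) × ℤ) :=
    (Finset.univ : Finset (Fin m)).sigma (fun i => (P i).coeff.support) with hsdef
  have hsum : ∑ x ∈ s, (P x.1).coeff x.2 * star ((P x.1).coeff x.2) = 0 := by
    rw [hsdef, Finset.sum_sigma]
    exact h0'
  have hz := posdef_finset C h s (fun x => (P x.1).coeff x.2) hsum
  ext n
  by_cases hn : n ∈ (P i).coeff.support
  · exact hz ⟨i, n⟩ (Finset.mem_sigma.mpr ⟨Finset.mem_univ i, hn⟩)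
  · exact Finsupp.notMem_support_iff.mp hn
end

section
/- Let R and T be *-rings and t : R → T a faithful trace. Let x ∈ R and let u ∈ R be an idempotent satisfying xu = x = ux and x*u = x* = ux*. Then xx* = u if and only if x*x = u. -/
theorem faithful_trace_partial_isometry_aux
    {R T : Type*} [NonUnitalRing R] [StarRing R] [NonUnitalRing T] [StarRing T]
    (t : R → T)
    (hadd : ∀ x y : R, t (x + y) = t x + t y)
    (htrace : ∀ x y : R, t (x * y) = t (y * x))
    (hfaithful : ∀ x : R, IsPositiveElem x → x ≠ 0 → IsPositiveElem (t x) ∧ t x ≠ 0)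
    (x u : R)
    (hxu : x * u = x) (hux : u * x = x)
    (hsxu : star x * u = star x) (husx : u * star x = star x)
    (h : x * star x = u) : star x * x = u := by
  set v := u - star x * x with hv
  -- relations involving star u
  have hxsu : x * star u = x := by
    have := congrArg star husx; simpa using this
  have hsux : star u * x = x := by
    have := congrArg star hsxu; simpa using this
  have hsusx : star u * star x = star x := by
    have := congrArg star hxu; simpa using this
  have hsxsu : star x * star u = star x := by
    have := congrArg star hux; simpa using this
  have hvv : v * star v = v := by
    have hsv : star v = star u - star x * x := by
      simp [hv, sub_eq_add_neg, add_comm, mul_comm]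
    rw [hsv, hv]
    have e1 : u * star u = u := by
      nth_rewrite 1 [← h]
      rw [mul_assoc, hsxsu, h]
    have e2 : u * (star x * x) = star x * x := by
      rw [← mul_assoc, husx]
    have e3 : (star x * x) * star u = star x * x := by
      rw [mul_assoc, hxsu]
    have e4 : (star x * x) * (star x * x) = star x * x := by
      calc (star x * x) * (star x * x) = star x * (x * star x) * x := by
            rw [mul_assoc, mul_assoc, mul_assoc]
        _ = star x * x := by rw [h, mul_assoc, hux]
    rw [sub_mul, mul_sub, mul_sub, e1, e2, e3, e4]
    abel
  have hvpos : IsPositiveElem v :=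
    AddSubmonoid.subset_closure ⟨v, hvv.symm⟩
  have htv : t v = 0 := by
    have h1 : star x * x + v = u := by rw [hv]; abel
    have h2 : t (star x * x) + t v = t u := by rw [← hadd, h1]
    have h3 : t u = t (star x * x) := by
      rw [← h, htrace]
    rw [h3] at h2
    exact (add_eq_left).1 h2
  by_contra hne
  have hvne : v ≠ 0 := fun h0 => hne ((sub_eq_zero.mp (hv ▸ h0)).symm)
  exact (hfaithful v hvpos hvne).2 htv

/-- Let `t : R → T` be a faithful trace between `*`-rings, `x ∈ R`, and
`u ∈ R` an idempotent with `xu = x = ux` and `x*u = x* = ux*`. Then `x x* = u` if and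
only if `x* x = u`. -/
theorem faithful_trace_partial_isometry
    {R T : Type*} [NonUnitalRing R] [StarRing R] [NonUnitalRing T] [StarRing T]
    (t : R → T)
    (hadd : ∀ x y : R, t (x + y) = t x + t y)
    (htrace : ∀ x y : R, t (x * y) = t (y * x))
    (hfaithful : ∀ x : R, IsPositiveElem x → x ≠ 0 → IsPositiveElem (t x) ∧ t x ≠ 0)
    (x u : R) (hu : u * u = u)
    (hxu : x * u = x) (hux : u * x = x)
    (hsxu : star x * u = star x) (husx : u * star x = star x) :
    x * star x = u ↔ star x * x = u := by
  constructor
  · exact faithful_trace_partial_isometry_aux t hadd htrace hfaithful x u hxu hux hsxu husx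
  · intro h
    have := faithful_trace_partial_isometry_aux t hadd htrace hfaithful (star x) u
      hsxu husx (by simpa using hxu) (by simpa using hux) (by simpa using h)
    simpa using this
end
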